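/- Let ℐ ⊆ ℝ be an interval, let a, b ∈ ℐ with a < b, let ν ∈ (0,1] and C ≥ 0, and let φ : ℐ → ℝ satisfy φ(λs+(1−λ)t) ≤ λφ(s) + (1−λ)φ(t) + C·λ(1−λ)·|s−t|^{ν+1} for all λ ∈ [0,1] whenever s and t both lie in ℐ ∩ [a,+∞), and also whenever s and t both lie in ℐ ∩ (−∞,b]. Then φ(λs+(1−λ)t) ≤ λφ(s) + (1−λ)φ(t) + 3C·λ(1−λ)·|s−t|^{ν+1} for all s, t ∈ ℐ and λ ∈ [0,1]. -/
import Mathlib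

set_option maxHeartbeats 1000000

/-- From a paraconvexity hypothesis on the segment `[u,v]`, a division-free bound
for the value at an intermediate point `w`, with the power term relaxed to `L ^ ν`. -/
lemma paraconvex_inst (φ : ℝ → ℝ) (C ν L : ℝ) (hC : 0 ≤ C) (hν : 0 < ν) (u v w : ℝ)
    (huv : u < v) (huw : u ≤ w) (hwv : w ≤ v) (hL : v - u ≤ L)
    (h : ∀ lam ∈ Set.Icc (0 : ℝ) 1, φ (lam * u + (1 - lam) * v) ≤
      lam * φ u + (1 - lam) * φ v + C * (lam * (1 - lam)) * |u - v| ^ (ν + 1)) :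
    (v - u) * φ w ≤ (v - w) * φ u + (w - u) * φ v + C * ((v - w) * (w - u)) * L ^ ν := by
  have hd : 0 < v - u := by linarith
  have hdne : v - u ≠ 0 := ne_of_gt hd
  set lam := (v - w) / (v - u) with hlam
  have h0 : 0 ≤ lam := div_nonneg (by linarith) hd.le
  have h1' : lam ≤ 1 := by rw [hlam, div_le_one hd]; linarith
  have hw : lam * u + (1 - lam) * v = w := by
    rw [hlam]; field_simp; ring
  have habs : |u - v| = v - u := by rw [abs_sub_comm, abs_of_pos hd]
  have hb := h lam ⟨h0, h1'⟩
  rw [hw, habs] at hb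
  have hpow : (v - u) ^ (ν + 1) ≤ (v - u) * L ^ ν := by
    have e1 : (v - u) ^ (ν + 1) = (v - u) ^ ν * (v - u) := by
      rw [Real.rpow_add hd, Real.rpow_one]
    have e2 : (v - u) ^ ν ≤ L ^ ν := Real.rpow_le_rpow hd.le hL hν.le
    rw [e1]
    nlinarith [hd.le]
  have hb2 : φ w ≤ lam * φ u + (1 - lam) * φ v + C * (lam * (1 - lam)) * ((v - u) * L ^ ν) := by
    have hcoef : 0 ≤ C * (lam * (1 - lam)) :=
      mul_nonneg hC (mul_nonneg h0 (by linarith))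
    nlinarith [mul_le_mul_of_nonneg_left hpow hcoef]
  have hA : lam * (v - u) = v - w := by rw [hlam]; field_simp
  have hB : (1 - lam) * (v - u) = w - u := by
    calc (1 - lam) * (v - u) = (v - u) - lam * (v - u) := by ring
    _ = w - u := by rw [hA]; ring
  have h3 := mul_le_mul_of_nonneg_left hb2 hd.le
  have e : (v - u) * (lam * φ u + (1 - lam) * φ v + C * (lam * (1 - lam)) * ((v - u) * L ^ ν))
      = (v - w) * φ u + (w - u) * φ v + C * ((v - w) * (w - u)) * L ^ ν := by
    rw [← hA, ← hB]; ring
  rw [e] at h3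
  exact h3

/-- The core gluing computation (division-free form), in the case `a ≤ x`. -/
lemma paraconvex_aux (C K s a b t x fs fa fb ft fx lam : ℝ)
    (hC : 0 ≤ C) (hK : 0 ≤ K)
    (hsa : s < a) (hab : a < b) (hbt : b < t)
    (hax : a ≤ x) (hx : x = lam * s + (1 - lam) * t)
    (hl0 : 0 ≤ lam) (hl1 : lam ≤ 1)
    (i : (b - s) * fa ≤ (b - a) * fs + (a - s) * fb + C * ((b - a) * (a - s)) * K)
    (ii : (t - a) * fb ≤ (t - b) * fa + (b - a) * ft + C * ((t - b) * (b - a)) * K)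
    (iii : (t - a) * fx ≤ (t - x) * fa + (x - a) * ft + C * ((t - x) * (x - a)) * K) :
    fx ≤ lam * fs + (1 - lam) * ft + 3 * C * (lam * (1 - lam)) * ((t - s) * K) := by
  subst hx
  have hts : (0:ℝ) < t - s := by linarith
  have hta : (0:ℝ) < t - a := by linarith
  have hba : (0:ℝ) < b - a := by linarith
  have has : (0:ℝ) < a - s := by linarith
  -- Step 1: eliminate fb to get a bound on fa across [s,t].
  have hIV : (t - s) * fa ≤ (t - a) * fs + (a - s) * ft + 2 * C * ((a - s) * (t - a)) * K := by
    have A := mul_le_mul_of_nonneg_left i hta.le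
    have B := mul_le_mul_of_nonneg_left ii has.le
    have hint : 0 ≤ C * (b - a) * (a - s) * (b - a) * K :=
      mul_nonneg (mul_nonneg (mul_nonneg (mul_nonneg hC hba.le) has.le) hba.le) hK
    have hsum : (b - a) * ((t - s) * fa)
        ≤ (b - a) * ((t - a) * fs + (a - s) * ft + 2 * C * ((a - s) * (t - a)) * K) := by
      linarith [A, B, hint]
    exact le_of_mul_le_mul_left hsum hba
  -- Step 2: combine with the bound at x between a and t.
  have htx : 0 ≤ t - (lam * s + (1 - lam) * t) := by nlinarith [mul_nonneg hl0 hts.le]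
  have F := mul_le_mul_of_nonneg_left iii hts.le
  have G := mul_le_mul_of_nonneg_left hIV htx
  -- Error-term comparison.
  have hxa : 0 ≤ (lam * s + (1 - lam) * t) - a := by linarith
  have key : ((t - a) * (t - s)) * (3 * C * (lam * (1 - lam)) * ((t - s) * K))
      - ((t - (lam * s + (1 - lam) * t)) * (2 * C * ((a - s) * (t - a)) * K)
        + (t - s) * (C * ((t - (lam * s + (1 - lam) * t)) * ((lam * s + (1 - lam) * t) - a)) * K))
      = C * K * ((lam * (t - s)) * (2 * ((t - a) * ((lam * s + (1 - lam) * t) - a))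
        + (lam * (t - s)) * (a - s))) := by ring
  have hpos : 0 ≤ C * K * ((lam * (t - s)) * (2 * ((t - a) * ((lam * s + (1 - lam) * t) - a))
      + (lam * (t - s)) * (a - s))) := by
    apply mul_nonneg (mul_nonneg hC hK)
    apply mul_nonneg (mul_nonneg hl0 hts.le)
    nlinarith [mul_nonneg hta.le hxa, mul_nonneg (mul_nonneg hl0 hts.le) has.le]
  have herr : (t - (lam * s + (1 - lam) * t)) * (2 * C * ((a - s) * (t - a)) * K)
      + (t - s) * (C * ((t - (lam * s + (1 - lam) * t)) * ((lam * s + (1 - lam) * t) - a)) * K)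
      ≤ ((t - a) * (t - s)) * (3 * C * (lam * (1 - lam)) * ((t - s) * K)) := by
    linarith [key, hpos]
  have main : (t - s) * ((t - a) * fx)
      ≤ (t - s) * ((t - a) * (lam * fs + (1 - lam) * ft
          + 3 * C * (lam * (1 - lam)) * ((t - s) * K))) := by
    linarith [F, G, herr]
  have step1 := le_of_mul_le_mul_left main hts
  exact le_of_mul_le_mul_left step1 hta

/-- If `φ` is `ν`-paraconvex (in the `λ(1-λ)` form, constant `C`) on
`ℐ ∩ [a,∞)` and on `ℐ ∩ (-∞,b]` where `a < b` in an interval `ℐ ⊆ ℝ`, then `φ` is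
`ν`-paraconvex on `ℐ` with constant `3C`. -/
theorem paraconvex_glue {I : Set ℝ} (hI : I.OrdConnected) {a b : ℝ}
    (ha : a ∈ I) (hb : b ∈ I) (hab : a < b) (ν C : ℝ)
    (hν : ν ∈ Set.Ioc (0 : ℝ) 1) (hC : 0 ≤ C) (φ : ℝ → ℝ)
    (h1 : ∀ s ∈ I ∩ Set.Ici a, ∀ t ∈ I ∩ Set.Ici a, ∀ lam ∈ Set.Icc (0 : ℝ) 1,
        φ (lam * s + (1 - lam) * t) ≤
          lam * φ s + (1 - lam) * φ t + C * (lam * (1 - lam)) * |s - t| ^ (ν + 1))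
    (h2 : ∀ s ∈ I ∩ Set.Iic b, ∀ t ∈ I ∩ Set.Iic b, ∀ lam ∈ Set.Icc (0 : ℝ) 1,
        φ (lam * s + (1 - lam) * t) ≤
          lam * φ s + (1 - lam) * φ t + C * (lam * (1 - lam)) * |s - t| ^ (ν + 1)) :
    ∀ s ∈ I, ∀ t ∈ I, ∀ lam ∈ Set.Icc (0 : ℝ) 1,
      φ (lam * s + (1 - lam) * t) ≤
        lam * φ s + (1 - lam) * φ t + 3 * C * (lam * (1 - lam)) * |s - t| ^ (ν + 1) := by
  obtain ⟨hν0, hν1⟩ := hν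
  have key : ∀ s ∈ I, ∀ t ∈ I, ∀ lam ∈ Set.Icc (0 : ℝ) 1, s < t →
      φ (lam * s + (1 - lam) * t) ≤
        lam * φ s + (1 - lam) * φ t + 3 * C * (lam * (1 - lam)) * |s - t| ^ (ν + 1) := by
    rintro s hs t ht lam ⟨hl0, hl1⟩ hst
    have hts : (0:ℝ) < t - s := by linarith
    have habs : |s - t| = t - s := by rw [abs_sub_comm, abs_of_pos hts]
    have hKnn : (0:ℝ) ≤ (t - s) ^ ν := Real.rpow_nonneg hts.le ν
    have hpowst : |s - t| ^ (ν + 1) = (t - s) * ((t - s) ^ ν) := by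
      rw [habs, Real.rpow_add hts, Real.rpow_one]; ring
    have herrnn : (0:ℝ) ≤ C * (lam * (1 - lam)) * |s - t| ^ (ν + 1) :=
      mul_nonneg (mul_nonneg hC (mul_nonneg hl0 (by linarith)))
        (Real.rpow_nonneg (abs_nonneg _) _)
    by_cases has : a ≤ s
    · have h := h1 s ⟨hs, has⟩ t ⟨ht, by simp only [Set.mem_Ici]; linarith⟩ lam ⟨hl0, hl1⟩
      linarith
    · push_neg at has
      by_cases htb : t ≤ b
      · have h := h2 s ⟨hs, by simp only [Set.mem_Iic]; linarith⟩ t ⟨ht, htb⟩ lam ⟨hl0, hl1⟩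
        linarith
      · push_neg at htb
        set x := lam * s + (1 - lam) * t with hxdef
        have hsb : s < b := by linarith
        have i := paraconvex_inst φ C ν (t - s) hC hν0 s b a hsb has.le hab.le
          (by linarith)
          (fun l hl => h2 s ⟨hs, Set.mem_Iic.mpr hsb.le⟩ b ⟨hb, Set.self_mem_Iic⟩ l hl)
        have ii := paraconvex_inst φ C ν (t - s) hC hν0 a t b (by linarith) hab.le htb.le
          (by linarith)
          (fun l hl => h1 a ⟨ha, Set.self_mem_Ici⟩ t ⟨ht, Set.mem_Ici.mpr (by linarith)⟩ l hl)
        rcases le_or_gt a x with hax | hxa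
        · have hxt : x ≤ t := by
            rw [hxdef]; nlinarith [mul_nonneg hl0 hts.le]
          have iii := paraconvex_inst φ C ν (t - s) hC hν0 a t x (by linarith) hax hxt
            (by linarith)
            (fun l hl => h1 a ⟨ha, Set.self_mem_Ici⟩ t ⟨ht, Set.mem_Ici.mpr (by linarith)⟩ l hl)
          have res := paraconvex_aux C ((t - s) ^ ν) s a b t x (φ s) (φ a) (φ b) (φ t) (φ x)
            lam hC hKnn has hab htb hax hxdef hl0 hl1 i ii iii
          rw [hpowst]
          linarith [res]
        · have hxb : x ≤ b := by linarith
          have hsx : s ≤ x := by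
            rw [hxdef]; nlinarith [mul_nonneg (by linarith : (0:ℝ) ≤ 1 - lam) hts.le]
          have iii' := paraconvex_inst φ C ν (t - s) hC hν0 s b x hsb hsx hxb
            (by linarith)
            (fun l hl => h2 s ⟨hs, Set.mem_Iic.mpr hsb.le⟩ b ⟨hb, Set.self_mem_Iic⟩ l hl)
          have hx' : -x = (1 - lam) * (-t) + (1 - (1 - lam)) * (-s) := by
            rw [hxdef]; ring
          have i' : (-a - -t) * φ b ≤ (-a - -b) * φ t + (-b - -t) * φ a
              + C * ((-a - -b) * (-b - -t)) * ((t - s) ^ ν) := by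
            nlinarith [ii]
          have ii' : (-s - -b) * φ a ≤ (-s - -a) * φ b + (-a - -b) * φ s
              + C * ((-s - -a) * (-a - -b)) * ((t - s) ^ ν) := by
            nlinarith [i]
          have iii'' : (-s - -b) * φ x ≤ (-s - -x) * φ b + (-x - -b) * φ s
              + C * ((-s - -x) * (-x - -b)) * ((t - s) ^ ν) := by
            nlinarith [iii']
          have res := paraconvex_aux C ((t - s) ^ ν) (-t) (-b) (-a) (-s) (-x)
            (φ t) (φ b) (φ a) (φ s) (φ x) (1 - lam) hC hKnn
            (by linarith) (by linarith) (by linarith) (by linarith) hx'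
            (by linarith) (by linarith) i' ii' iii''
          rw [hpowst]
          nlinarith [res]
  intro s hs t ht lam hlam
  rcases lt_trichotomy s t with h | h | h
  · exact key s hs t ht lam hlam h
  · subst h
    have hx : lam * s + (1 - lam) * s = s := by ring
    rw [hx]
    have herrnn : (0:ℝ) ≤ 3 * C * (lam * (1 - lam)) * |s - s| ^ (ν + 1) :=
      mul_nonneg (mul_nonneg (by linarith) (mul_nonneg hlam.1 (by linarith [hlam.2])))
        (Real.rpow_nonneg (abs_nonneg _) _)
    nlinarith [herrnn]
  · have h' := key t ht s hs (1 - lam) ⟨by linarith [hlam.2], by linarith [hlam.1]⟩ h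
    have e : (1 - lam) * t + (1 - (1 - lam)) * s = lam * s + (1 - lam) * t := by ring
    rw [e, abs_sub_comm t s] at h'
    nlinarith [h']
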